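/- With R(θ) = sin(θ)cos(θ)/(m₊² sin²θ + m₋² cos²θ)^{1/2} for coprime positive integers m₋, m₊, one has −R''(θ)/R(θ) = 1 + 3 m₋² m₊² / (m₋² cos²θ + m₊² sin²θ)² for all θ ∈ (0, π/2). In particular, the sectional curvature of the quotient S³/S¹ equals this expression and is strictly greater than 1 on the regular part. -/

import Mathlib

open Real Set

noncomputable def Qf (a b t : ℝ) : ℝ := b * Real.sin t ^ 2 + a * Real.cos t ^ 2

lemma Qf_pos {a b : ℝ} (ha : 0 < a) (hb : 0 < b) (t : ℝ) : 0 < Qf a b t := by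
  have h := Real.sin_sq_add_cos_sq t
  unfold Qf
  rcases eq_or_lt_of_le (sq_nonneg (Real.sin t)) with hs | hs
  · nlinarith
  · nlinarith [mul_nonneg ha.le (sq_nonneg (Real.cos t)), mul_pos hb hs]

lemma Qf_hasDerivAt (a b t : ℝ) :
    HasDerivAt (Qf a b) (2 * (b - a) * Real.sin t * Real.cos t) t := by
  have h : HasDerivAt (fun t => b * Real.sin t ^ 2 + a * Real.cos t ^ 2)
      (b * ((2 : ℕ) * Real.sin t ^ 1 * Real.cos t) + a * ((2 : ℕ) * Real.cos t ^ 1 * (-Real.sin t))) t :=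
    (((Real.hasDerivAt_sin t).pow 2).const_mul b).add
      (((Real.hasDerivAt_cos t).pow 2).const_mul a)
  refine h.congr_deriv (Eq.symm ?_)
  push_cast; ring

noncomputable def D1f (a b t : ℝ) : ℝ :=
  ((Real.cos t ^ 2 - Real.sin t ^ 2) * Qf a b t - (b - a) * Real.sin t ^ 2 * Real.cos t ^ 2) /
    (Qf a b t * Real.sqrt (Qf a b t))

noncomputable def D2f (a b t : ℝ) : ℝ :=
  Real.sin t * Real.cos t *
      (-4 * Qf a b t ^ 2 -
        3 * (b - a) *
          ((Real.cos t ^ 2 - Real.sin t ^ 2) * Qf a b t -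
            (b - a) * Real.sin t ^ 2 * Real.cos t ^ 2)) /
    (Qf a b t ^ 2 * Real.sqrt (Qf a b t))

lemma sqrt_Qf_hasDerivAt {a b : ℝ} (ha : 0 < a) (hb : 0 < b) (t : ℝ) :
    HasDerivAt (fun t => Real.sqrt (Qf a b t))
      (1 / (2 * Real.sqrt (Qf a b t)) * (2 * (b - a) * Real.sin t * Real.cos t)) t :=
  (Real.hasDerivAt_sqrt (Qf_pos ha hb t).ne').comp t (Qf_hasDerivAt a b t)

lemma der1 {a b : ℝ} (ha : 0 < a) (hb : 0 < b) (t : ℝ) :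
    HasDerivAt (fun t => Real.sin t * Real.cos t / Real.sqrt (Qf a b t)) (D1f a b t) t := by
  have hQ := Qf_pos ha hb t
  have hu : 0 < Real.sqrt (Qf a b t) := Real.sqrt_pos.mpr hQ
  have hsq : Real.sqrt (Qf a b t) ^ 2 = Qf a b t := Real.sq_sqrt hQ.le
  have hnum : HasDerivAt (fun t => Real.sin t * Real.cos t)
      (Real.cos t * Real.cos t + Real.sin t * (-Real.sin t)) t :=
    (Real.hasDerivAt_sin t).mul (Real.hasDerivAt_cos t)
  have h := hnum.div (sqrt_Qf_hasDerivAt ha hb t) hu.ne'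
  refine h.congr_deriv (Eq.symm ?_)
  unfold D1f
  set u := Real.sqrt (Qf a b t) with hu'
  rw [← hsq]
  field_simp
  ring

lemma der2 {a b : ℝ} (ha : 0 < a) (hb : 0 < b) (t : ℝ) :
    HasDerivAt (D1f a b) (D2f a b t) t := by
  have hQ := Qf_pos ha hb t
  have hu : 0 < Real.sqrt (Qf a b t) := Real.sqrt_pos.mpr hQ
  have hsq : Real.sqrt (Qf a b t) ^ 2 = Qf a b t := Real.sq_sqrt hQ.le
  have hP1 : HasDerivAt
      (fun t => (Real.cos t ^ 2 - Real.sin t ^ 2) * Qf a b t -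
        (b - a) * Real.sin t ^ 2 * Real.cos t ^ 2)
      (-4 * Real.sin t * Real.cos t * Qf a b t) t := by
    have h1 : HasDerivAt (fun t => Real.cos t ^ 2 - Real.sin t ^ 2)
        ((2 : ℕ) * Real.cos t ^ 1 * (-Real.sin t) - (2 : ℕ) * Real.sin t ^ 1 * Real.cos t) t :=
      ((Real.hasDerivAt_cos t).pow 2).sub ((Real.hasDerivAt_sin t).pow 2)
    have h2 := h1.mul (Qf_hasDerivAt a b t)
    have h3 : HasDerivAt (fun t => Real.sin t ^ 2 * Real.cos t ^ 2)
        ((2 : ℕ) * Real.sin t ^ 1 * Real.cos t * Real.cos t ^ 2 +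
          Real.sin t ^ 2 * ((2 : ℕ) * Real.cos t ^ 1 * (-Real.sin t))) t :=
      ((Real.hasDerivAt_sin t).pow 2).mul ((Real.hasDerivAt_cos t).pow 2)
    have h4 := h2.sub (h3.const_mul (b - a))
    refine (h4.congr_deriv (Eq.symm ?_)).congr_of_eventuallyEq (Filter.Eventually.of_forall fun x => ?_)
    · push_cast; ring
    · simp only [Pi.mul_apply, Pi.sub_apply]; ring
  have hg : HasDerivAt (fun t => Qf a b t * Real.sqrt (Qf a b t))
      (2 * (b - a) * Real.sin t * Real.cos t * Real.sqrt (Qf a b t) +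
        Qf a b t * (1 / (2 * Real.sqrt (Qf a b t)) * (2 * (b - a) * Real.sin t * Real.cos t))) t :=
    (Qf_hasDerivAt a b t).mul (sqrt_Qf_hasDerivAt ha hb t)
  have h := hP1.div hg (by positivity)
  have hfun : D1f a b = fun t =>
      ((Real.cos t ^ 2 - Real.sin t ^ 2) * Qf a b t -
        (b - a) * Real.sin t ^ 2 * Real.cos t ^ 2) / (Qf a b t * Real.sqrt (Qf a b t)) := rfl
  rw [hfun]
  refine h.congr_deriv (Eq.symm ?_)
  unfold D2f
  set u := Real.sqrt (Qf a b t) with hu'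
  rw [← hsq]
  field_simp
  ring

/-- For `R(θ) = sin θ cos θ / (m₊² sin²θ + m₋² cos²θ)^{1/2}` with `m₋, m₊` coprime
positive integers, one has `-R''(θ)/R(θ) = 1 + 3 m₋² m₊² / (m₋² cos²θ + m₊² sin²θ)²`
on `(0, π/2)`; in particular the sectional curvature `-R''/R` of the quotient
`S³/S¹` equals this expression and is strictly greater than `1` on the regular part. -/
theorem statement3 (mm mp : ℕ) (hcop : Nat.Coprime mm mp) (hmm : 0 < mm) (hmp : 0 < mp)
    (R : ℝ → ℝ)
    (hR : ∀ θ : ℝ, R θ =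
      Real.sin θ * Real.cos θ /
        Real.sqrt ((mp : ℝ) ^ 2 * Real.sin θ ^ 2 + (mm : ℝ) ^ 2 * Real.cos θ ^ 2)) :
    ∀ θ ∈ Set.Ioo (0 : ℝ) (π / 2),
      -(deriv (deriv R) θ) / R θ
          = 1 + 3 * (mm : ℝ) ^ 2 * (mp : ℝ) ^ 2 /
              ((mm : ℝ) ^ 2 * Real.cos θ ^ 2 + (mp : ℝ) ^ 2 * Real.sin θ ^ 2) ^ 2
        ∧ 1 < -(deriv (deriv R) θ) / R θ := by
  have hmm' : (0 : ℝ) < (mm : ℝ) := by exact_mod_cast hmm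
  have hmp' : (0 : ℝ) < (mp : ℝ) := by exact_mod_cast hmp
  set a : ℝ := (mm : ℝ) ^ 2 with hadef
  set b : ℝ := (mp : ℝ) ^ 2 with hbdef
  have ha : 0 < a := by positivity
  have hb : 0 < b := by positivity
  have hRfun : R = fun t => Real.sin t * Real.cos t / Real.sqrt (Qf a b t) := by
    funext t; rw [hR]; rfl
  have hderiv : deriv R = D1f a b := by
    rw [hRfun]; funext t; exact (der1 ha hb t).deriv
  intro θ hθ
  obtain ⟨hθ1, hθ2⟩ := hθ
  have hpi := Real.pi_pos
  have hs : 0 < Real.sin θ := Real.sin_pos_of_pos_of_lt_pi hθ1 (by linarith)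
  have hc : 0 < Real.cos θ := Real.cos_pos_of_mem_Ioo ⟨by linarith, hθ2⟩
  have hQ := Qf_pos ha hb θ
  have hu : 0 < Real.sqrt (Qf a b θ) := Real.sqrt_pos.mpr hQ
  have hpyth := Real.sin_sq_add_cos_sq θ
  have hd2 : deriv (deriv R) θ = D2f a b θ := by
    rw [hderiv]; exact (der2 ha hb θ).deriv
  have hRθ : R θ = Real.sin θ * Real.cos θ / Real.sqrt (Qf a b θ) := by rw [hR]; rfl
  have step1 : -(D2f a b θ) / (Real.sin θ * Real.cos θ / Real.sqrt (Qf a b θ)) =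
      (4 * Qf a b θ ^ 2 + 3 * (b - a) *
        ((Real.cos θ ^ 2 - Real.sin θ ^ 2) * Qf a b θ -
          (b - a) * Real.sin θ ^ 2 * Real.cos θ ^ 2)) / Qf a b θ ^ 2 := by
    unfold D2f
    field_simp
    ring
  have step2 : (4 * Qf a b θ ^ 2 + 3 * (b - a) *
        ((Real.cos θ ^ 2 - Real.sin θ ^ 2) * Qf a b θ -
          (b - a) * Real.sin θ ^ 2 * Real.cos θ ^ 2)) / Qf a b θ ^ 2 =
      1 + 3 * a * b / (a * Real.cos θ ^ 2 + b * Real.sin θ ^ 2) ^ 2 := by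
    have h1 : a * Real.cos θ ^ 2 + b * Real.sin θ ^ 2 = Qf a b θ := by unfold Qf; ring
    rw [h1]
    field_simp
    unfold Qf
    rw [show Real.cos θ ^ 2 = 1 - Real.sin θ ^ 2 by linarith]
    ring
  have key : -(deriv (deriv R) θ) / R θ =
      1 + 3 * a * b / (a * Real.cos θ ^ 2 + b * Real.sin θ ^ 2) ^ 2 := by
    rw [hd2, hRθ, step1, step2]
  have hQ2 : 0 < a * Real.cos θ ^ 2 + b * Real.sin θ ^ 2 := by
    have := hQ; unfold Qf at this; linarith
  constructor
  · rw [key]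
  · rw [key]
    have : 0 < 3 * a * b / (a * Real.cos θ ^ 2 + b * Real.sin θ ^ 2) ^ 2 :=
      div_pos (by positivity) (pow_pos hQ2 2)
    linarith
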